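/- arXiv:2010.13328 — 3 statements merged into one kernel-verified Lean document; each statement's English description precedes it below -/
import Mathlib

section
/- For any relational signature σ and k > 0, the Ehrenfeucht–Fraïssé construction E_k is a comonad on the category of σ-structures: given a σ-structure A, define E_k A with universe the nonempty sequences over A of length ≤ k, counit ε_A sending a sequence to its last element, relations lifted so that R^{E_k A}(s_1,…,s_n) holds iff the s_i are pairwise comparable in the prefix order and R^A(ε s_1,…,ε s_n), and coextension f* sending [a_1,…,a_j] to [b_1,…,b_j] where b_i = f[a_1,…,a_i]. Then the comonad laws hold: ε is the counit, coextension is functorial, and the co-Kleisli identities (f*·η = f analogues) are satisfied. -/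
/-- A relational signature: a set of relation symbols with arities. -/
structure Signature where
  symbols : Type
  arity : symbols → ℕ

/-- A relational structure for a signature `σ`. -/
structure Struct (σ : Signature) where
  carrier : Type
  rel : ∀ r : σ.symbols, (Fin (σ.arity r) → carrier) → Prop

/-- Homomorphisms of relational structures. -/
def IsHom {σ : Signature} (A B : Struct σ) (f : A.carrier → B.carrier) : Prop :=
  ∀ r x, A.rel r x → B.rel r (fun i => f (x i))

/-- Nonempty sequences of length at most `k`. -/
def NESeq (A : Type) (k : ℕ) : Type := { l : List A // l ≠ [] ∧ l.length ≤ k }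

/-- The last element of a nonempty sequence (the counit of the EF comonad). -/
def lastOf {A : Type} {k : ℕ} (s : NESeq A k) : A := s.1.getLast s.2.1

/-- Co-Kleisli coextension for the EF comonad: `f*[a₁,…,a_j] = [f[a₁],…,f[a₁,…,a_j]]`. -/
def coext {A B : Type} {k : ℕ} (f : NESeq A k → B) (s : NESeq A k) : NESeq B k :=
  ⟨(List.finRange s.1.length).map fun i =>
      f ⟨s.1.take (i.1 + 1), by
        have h1 := i.2
        have h2 := s.2.2
        constructor
        · apply List.ne_nil_of_length_pos
          simp [List.length_take]
          try omega
        · simp [List.length_take]; omega⟩, by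
    have h1 := s.2.1
    have h2 := s.2.2
    constructor
    · apply List.ne_nil_of_length_pos
      simpa [List.length_pos_iff] using h1
    · simpa using h2⟩

/-- The Ehrenfeucht–Fraïssé comonad on structures: the universe of `EF k A` consists of
nonempty sequences of length ≤ k over `A`, and a relation holds of a tuple of sequences
iff they are pairwise prefix-comparable and the relation holds in `A` of their last
elements. -/
def EF {σ : Signature} (k : ℕ) (A : Struct σ) : Struct σ where
  carrier := NESeq A.carrier k
  rel r x := (∀ i j, (x i).1 <+: (x j).1 ∨ (x j).1 <+: (x i).1) ∧
    A.rel r (fun i => lastOf (x i))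

/-- The Gaifman graph of a structure. -/
def gaifman {σ : Signature} (A : Struct σ) (a a' : A.carrier) : Prop :=
  a ≠ a' ∧ ∃ (r : σ.symbols) (x : Fin (σ.arity r) → A.carrier) (i j : Fin (σ.arity r)),
    A.rel r x ∧ x i = a ∧ x j = a' ∧ i ≠ j

/-- `α : A → E_k A` is a coalgebra for the EF comonad: it is a homomorphism satisfying
the counit and comultiplication laws. -/
def IsEFCoalg {σ : Signature} (k : ℕ) (A : Struct σ) (α : A.carrier → NESeq A.carrier k) : Prop :=
  IsHom A (EF k A) α ∧
  (∀ a, lastOf (α a) = a) ∧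
  (∀ (a : A.carrier) (i : ℕ) (h : i < (α a).1.length),
      (α ((α a).1.get ⟨i, h⟩)).1 = (α a).1.take (i + 1))

/-- A forest cover of height ≤ k of a graph `(V, adj)`: a forest order in which the
predecessors of any element form a chain of size ≤ k, and adjacent vertices are
comparable. -/
structure ForestCover (V : Type) (adj : V → V → Prop) (k : ℕ) where
  le : V → V → Prop
  le_refl : ∀ a, le a a
  le_antisymm : ∀ a b, le a b → le b a → a = b
  le_trans : ∀ a b c, le a b → le b c → le a c
  pred_chain : ∀ a b c, le b a → le c a → le b c ∨ le c b
  pred_finite : ∀ a, {b | le b a}.Finite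
  height : ∀ a, {b | le b a}.ncard ≤ k
  cover : ∀ a b, adj a b → le a b ∨ le b a

variable {A B C : Type} {k : ℕ}

lemma coext_length (f : NESeq A k → B) (s : NESeq A k) :
    (coext f s).1.length = s.1.length := by simp [coext]

lemma coext_getElem (f : NESeq A k → B) (s : NESeq A k) (i : ℕ)
    (h : i < (coext f s).1.length) (h' : s.1.take (i+1) ≠ [] ∧ (s.1.take (i+1)).length ≤ k) :
    (coext f s).1[i] = f ⟨s.1.take (i+1), h'⟩ := by
  simp [coext]

lemma take_mem (s : NESeq A k) (i : ℕ) (h : i < s.1.length) :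
    s.1.take (i+1) ≠ [] ∧ (s.1.take (i+1)).length ≤ k := by
  have h2 := s.2.2
  constructor
  · apply List.ne_nil_of_length_pos
    simp [List.length_take]; omega
  · simp [List.length_take]; omega

lemma lastOf_coext (f : NESeq A k → B) (s : NESeq A k) :
    lastOf (coext f s) = f s := by
  have hl : (coext f s).1.length = s.1.length := coext_length f s
  have hpos : 0 < s.1.length := List.length_pos_iff.mpr s.2.1
  rw [lastOf, List.getLast_eq_getElem]
  rw [coext_getElem f s _ (by omega) (take_mem s _ (by omega))]
  congr 1
  apply Subtype.ext
  simp [hl]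
  omega

lemma coext_lastOf (s : NESeq A k) : coext lastOf s = s := by
  apply Subtype.ext
  apply List.ext_getElem (coext_length _ s)
  intro i h1 h2
  rw [coext_getElem _ s i h1 (take_mem s i h2)]
  unfold lastOf; rw [List.getLast_eq_getElem]
  have : (s.1.take (i+1)).length = i + 1 := by simp [List.length_take]; omega
  simp only [this]
  simp [List.getElem_take]

lemma coext_prefix (f : NESeq A k → B) (s t : NESeq A k) (h : s.1 <+: t.1) :
    (coext f s).1 <+: (coext f t).1 := by
  have hle : s.1.length ≤ t.1.length := h.length_le
  rw [List.prefix_iff_eq_take] at h ⊢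
  rw [coext_length]
  apply List.ext_getElem
  · simp [coext_length, List.length_take]; omega
  intro i h1 h2
  rw [List.getElem_take]
  have hi : i < s.1.length := by rwa [coext_length] at h1
  rw [coext_getElem f s i h1 (take_mem s i hi),
      coext_getElem f t i (by rw [coext_length]; omega) (take_mem t i (by omega))]
  congr 1
  apply Subtype.ext
  show s.1.take (i+1) = t.1.take (i+1)
  conv_lhs => rw [h]
  rw [List.take_take]
  congr 1
  omega

lemma coext_take (f : NESeq A k → B) (s : NESeq A k) (i : ℕ) (hi : i < s.1.length)
    (h1 : (coext f s).1.take (i+1) ≠ [] ∧ ((coext f s).1.take (i+1)).length ≤ k)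
    (h2 : s.1.take (i+1) ≠ [] ∧ (s.1.take (i+1)).length ≤ k) :
    (⟨(coext f s).1.take (i+1), h1⟩ : NESeq B k) = coext f ⟨s.1.take (i+1), h2⟩ := by
  apply Subtype.ext
  apply List.ext_getElem
  · simp [coext_length, List.length_take]; erw [coext_length]; simp
  intro j hj1 hj2
  erw [coext_length] at hj2
  simp only [List.length_take] at hj2
  have hj : j < i + 1 := by omega
  have hjs : j < s.1.length := by omega
  rw [List.getElem_take, coext_getElem f s j (by rw [coext_length]; omega) (take_mem s j hjs)]
  rw [coext_getElem f _ j (by erw [coext_length]; show j < (s.1.take (i+1)).length; simp [List.length_take]; omega)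
    (take_mem ⟨s.1.take (i+1), h2⟩ j (by show j < (s.1.take (i+1)).length; simp [List.length_take]; omega))]
  congr 1
  apply Subtype.ext
  show s.1.take (j+1) = (s.1.take (i+1)).take (j+1)
  rw [List.take_take]
  congr 1
  omega
/-- For any relational signature and `k > 0`, the EF construction `E_k`,
with counit `lastOf` and coextension `coext`, is a comonad (in co-Kleisli form) on the
category of σ-structures: the counit is a homomorphism `E_k A → A`, coextension sends
homomorphisms `E_k A → B` to homomorphisms `E_k A → E_k B`, and the co-Kleisli comonad
laws `ε* = id`, `ε ∘ f* = f`, `(g ∘ f*)* = g* ∘ f*` hold. -/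
theorem EF_is_comonad (σ : Signature) (k : ℕ) (hk : 0 < k) :
    (∀ A : Struct σ, IsHom (EF k A) A lastOf) ∧
    (∀ (A B : Struct σ) (f : NESeq A.carrier k → B.carrier),
        IsHom (EF k A) B f → IsHom (EF k A) (EF k B) (coext f)) ∧
    (∀ (A : Struct σ), coext (lastOf : NESeq A.carrier k → A.carrier) = id) ∧
    (∀ (A B : Struct σ) (f : NESeq A.carrier k → B.carrier) (s : NESeq A.carrier k),
        lastOf (coext f s) = f s) ∧
    (∀ (A B C : Struct σ) (f : NESeq A.carrier k → B.carrier)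
        (g : NESeq B.carrier k → C.carrier),
        coext (fun s => g (coext f s)) = fun s => coext g (coext f s)) := by
  refine ⟨?_, ?_, ?_, ?_, ?_⟩
  · intro A r x hx
    exact hx.2
  · intro A B f hf r x hx
    refine ⟨?_, ?_⟩
    · intro i j
      rcases hx.1 i j with h | h
      · exact Or.inl (coext_prefix f _ _ h)
      · exact Or.inr (coext_prefix f _ _ h)
    · have he : (fun i => lastOf (coext f (x i))) = fun i => f (x i) := by
        funext i; exact lastOf_coext f (x i)
      rw [he]
      exact hf r x hx
  · intro A
    funext s
    exact coext_lastOf s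
  · intro A B f s
    exact lastOf_coext f s
  · intro A B C f g
    funext s
    apply Subtype.ext
    apply List.ext_getElem (by simp [coext_length])
    intro i h1 h2
    have hi : i < s.1.length := by rwa [coext_length] at h1
    have hi' : i < (coext f s).1.length := by rw [coext_length]; exact hi
    rw [coext_getElem _ s i h1 (take_mem s i hi)]
    rw [coext_getElem g (coext f s) i h2 (take_mem _ i hi')]
    show g (coext f _) = _
    congr 1
    exact (coext_take f s i hi _ _).symm
end

section
/- Let A be a finite σ-structure and k > 0. There is a bijective correspondence between P_k-coalgebras α : A → P_k A and k-pebble forest covers of the Gaifman graph of A. -/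
/-- The universe of the pebbling comonad: finite nonempty sequences of moves
`(pebble index, element)`. -/
def Peb (A : Type) (k : ℕ) : Type := { l : List (Fin k × A) // l ≠ [] }

/-- Last element of a pebbling play. -/
def lastP {A : Type} {k : ℕ} (s : Peb A k) : Fin k × A := s.1.getLast s.2

/-- The pebbling compatibility condition on a pair of plays: they are
prefix-comparable, and the pebble index of the last move of the shorter one does not
reappear in the suffix extending it to the longer one. -/
def pebCond {A : Type} {k : ℕ} (s t : List (Fin k × A)) : Prop :=
  (s <+: t ∧ ∀ m ∈ t.drop s.length, s.getLast?.map Prod.fst ≠ some m.1) ∨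
  (t <+: s ∧ ∀ m ∈ s.drop t.length, t.getLast?.map Prod.fst ≠ some m.1)

/-- The pebbling comonad on structures: `P_k A` has universe the finite nonempty
sequences over `{1,…,k} × A`; a relation holds of a tuple of plays iff they are
pairwise prefix-comparable satisfying the pebbling condition, and the relation holds in
`A` of their last elements. -/
def PebStruct {σ : Signature} (k : ℕ) (A : Struct σ) : Struct σ where
  carrier := Peb A.carrier k
  rel r x := (∀ i j, pebCond (x i).1 (x j).1) ∧ A.rel r (fun i => (lastP (x i)).2)

/-- Co-Kleisli coextension for the pebbling comonad. -/
def coextP {A B : Type} {k : ℕ} (f : Peb A k → B) (s : Peb A k) : Peb B k :=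
  ⟨(List.finRange s.1.length).map fun i =>
      ((s.1.get i).1, f ⟨s.1.take (i.1 + 1), by
        have := i.2
        apply List.ne_nil_of_length_pos
        simp only [List.length_take]
        omega⟩), by
    apply List.ne_nil_of_length_pos
    have := s.2
    simp only [List.length_map, List.length_finRange]
    exact List.length_pos_iff.mpr this⟩

/-- `α : A → P_k A` is a coalgebra for the pebbling comonad. -/
def IsPebCoalg {σ : Signature} (k : ℕ) (A : Struct σ) (α : A.carrier → Peb A.carrier k) : Prop :=
  IsHom A (PebStruct k A) α ∧
  (∀ a, (lastP (α a)).2 = a) ∧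
  (∀ (a : A.carrier) (i : ℕ) (h : i < (α a).1.length),
      (α ((α a).1.get ⟨i, h⟩).2).1 = (α a).1.take (i + 1))

/-- A `k`-pebble forest cover of a graph `(V, adj)`: a forest cover together with a
pebbling function `p : V → {1,…,k}` such that if `v ⌢ v'` with `v ≤ v'` then
`p v ≠ p w` for all `w` with `v < w ≤ v'`. -/
structure PebbleForestCover (V : Type) (adj : V → V → Prop) (k : ℕ) where
  le : V → V → Prop
  le_refl : ∀ a, le a a
  le_antisymm : ∀ a b, le a b → le b a → a = b
  le_trans : ∀ a b c, le a b → le b c → le a c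
  pred_chain : ∀ a b c, le b a → le c a → le b c ∨ le c b
  pred_finite : ∀ a, {b | le b a}.Finite
  cover : ∀ a b, adj a b → le a b ∨ le b a
  p : V → Fin k
  pebble : ∀ v v' w, adj v v' → le v v' → le v w → v ≠ w → le w v' → p v ≠ p w

/-- A tree decomposition of width ≤ w of a graph `(V, adj)`: a tree `(T, ≤)` with a
labelling `λ : T → P(V)` such that every vertex occurs in some label, every edge is
contained in some label, the set of nodes containing a given vertex is path-closed, and
every label has at most `w + 1` elements. -/
structure TreeDecomp (V : Type) (adj : V → V → Prop) (w : ℕ) where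
  T : Type
  le : T → T → Prop
  le_refl : ∀ a, le a a
  le_antisymm : ∀ a b, le a b → le b a → a = b
  le_trans : ∀ a b c, le a b → le b c → le a c
  pred_chain : ∀ a b c, le b a → le c a → le b c ∨ le c b
  pred_finite : ∀ a, {b | le b a}.Finite
  root : T
  root_le : ∀ x, le root x
  label : T → Set V
  td1 : ∀ v, ∃ x, v ∈ label x
  td2 : ∀ v v', adj v v' → ∃ x, v ∈ label x ∧ v' ∈ label x
  td3 : ∀ (v : V) (x y z : T), v ∈ label x → v ∈ label y →
      (le z x ∨ le z y) → (∀ u, le u x → le u y → le u z) → v ∈ label z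
  label_finite : ∀ x, (label x).Finite
  width : ∀ x, (label x).ncard ≤ w + 1

-- development part, to be inserted before the theorem
namespace PebProof

open List

variable {V : Type} {adj : V → V → Prop} {k : ℕ}

/-- Depth of a vertex: number of predecessors. -/
noncomputable def depth (C : PebbleForestCover V adj k) (a : V) : ℕ :=
  (C.pred_finite a).toFinset.card

lemma depth_lt (C : PebbleForestCover V adj k) {a b : V} (h : C.le b a) (hne : b ≠ a) :
    depth C b < depth C a := by
  apply Finset.card_lt_card
  constructor
  · intro c hc
    simp only [Set.Finite.mem_toFinset, Set.mem_setOf_eq] at *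
    exact C.le_trans _ _ _ hc h
  · intro hsub
    have ha : a ∈ (C.pred_finite a).toFinset := by
      simp [Set.Finite.mem_toFinset, C.le_refl]
    have := hsub ha
    simp only [Set.Finite.mem_toFinset, Set.mem_setOf_eq] at this
    exact hne (C.le_antisymm _ _ h (by exact this)) |>.elim

lemma exists_maxpred (C : PebbleForestCover V adj k) {a : V}
    (h : ∃ b, C.le b a ∧ b ≠ a) :
    ∃ m, (C.le m a ∧ m ≠ a) ∧ ∀ c, C.le c a → c ≠ a → C.le c m := by
  obtain ⟨b0, hb0⟩ := h
  have hfin : {b | C.le b a ∧ b ≠ a}.Finite :=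
    (C.pred_finite a).subset (fun x hx => hx.1)
  obtain ⟨m, hm, hmax⟩ := Set.Finite.exists_maximalFor (depth C) _ hfin ⟨b0, hb0⟩
  refine ⟨m, hm, ?_⟩
  intro c hc hca
  rcases C.pred_chain a m c hm.1 hc with h1 | h1
  · by_cases hmc : m = c
    · subst hmc; exact C.le_refl _
    · have heq := hmax (j := c) ⟨hc, hca⟩ (depth_lt C h1 hmc).le
      have := depth_lt C h1 hmc
      omega
  · exact h1

noncomputable def maxpred (C : PebbleForestCover V adj k) (a : V)
    (h : ∃ b, C.le b a ∧ b ≠ a) : V :=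
  (exists_maxpred C h).choose

lemma maxpred_le (C : PebbleForestCover V adj k) (a : V) (h : ∃ b, C.le b a ∧ b ≠ a) :
    C.le (maxpred C a h) a := (exists_maxpred C h).choose_spec.1.1

lemma maxpred_ne (C : PebbleForestCover V adj k) (a : V) (h : ∃ b, C.le b a ∧ b ≠ a) :
    maxpred C a h ≠ a := (exists_maxpred C h).choose_spec.1.2

lemma maxpred_max (C : PebbleForestCover V adj k) (a : V) (h : ∃ b, C.le b a ∧ b ≠ a)
    {c : V} (hc : C.le c a) (hca : c ≠ a) : C.le c (maxpred C a h) :=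
  (exists_maxpred C h).choose_spec.2 c hc hca

open Classical in
/-- The chain of predecessors of `a`, listed in increasing order. -/
noncomputable def listOf (C : PebbleForestCover V adj k) (a : V) : List V :=
  if h : ∃ b, C.le b a ∧ b ≠ a then listOf C (maxpred C a h) ++ [a] else [a]
termination_by depth C a
decreasing_by exact depth_lt C (maxpred_le C a h) (maxpred_ne C a h)

/-- Custom induction principle following the recursion of `listOf`. -/
lemma listOf_rec (C : PebbleForestCover V adj k) {P : V → Prop}
    (h1 : ∀ a, ¬(∃ b, C.le b a ∧ b ≠ a) → P a)
    (h2 : ∀ a (h : ∃ b, C.le b a ∧ b ≠ a), P (maxpred C a h) → P a) : ∀ a, P a := by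
  have key : ∀ n a, depth C a = n → P a := by
    intro n
    induction n using Nat.strong_induction_on with
    | _ n ih =>
      intro a ha
      by_cases h : ∃ b, C.le b a ∧ b ≠ a
      · exact h2 a h (ih _ (ha ▸ depth_lt C (maxpred_le C a h) (maxpred_ne C a h)) _ rfl)
      · exact h1 a h
  exact fun a => key _ a rfl


lemma listOf_pos (C : PebbleForestCover V adj k) (a : V) (h : ∃ b, C.le b a ∧ b ≠ a) :
    listOf C a = listOf C (maxpred C a h) ++ [a] := by
  conv_lhs => rw [listOf]
  rw [dif_pos h]

lemma listOf_neg (C : PebbleForestCover V adj k) (a : V) (h : ¬∃ b, C.le b a ∧ b ≠ a) :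
    listOf C a = [a] := by
  conv_lhs => rw [listOf]
  rw [dif_neg h]

lemma listOf_ne_nil (C : PebbleForestCover V adj k) (a : V) : listOf C a ≠ [] := by
  rw [listOf]
  split <;> simp

lemma getLast?_listOf (C : PebbleForestCover V adj k) (a : V) :
    (listOf C a).getLast? = some a := by
  rw [listOf]
  split
  · exact List.getLast?_concat
  · rfl

lemma getLast_listOf (C : PebbleForestCover V adj k) (a : V) (h : listOf C a ≠ []) :
    (listOf C a).getLast h = a := by
  have h1 := getLast?_listOf C a
  rw [List.getLast?_eq_getLast_of_ne_nil h] at h1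
  exact Option.some_injective _ h1

lemma mem_listOf (C : PebbleForestCover V adj k) (a : V) :
    ∀ b, b ∈ listOf C a ↔ C.le b a := by
  induction a using listOf_rec C with
  | h1 a h =>
    intro b
    rw [listOf_neg C a h]
    simp only [List.mem_singleton]
    constructor
    · rintro rfl; exact C.le_refl _
    · intro hle
      by_contra hne
      exact h ⟨b, hle, hne⟩
  | h2 a h ih =>
    intro b
    rw [listOf_pos C a h]
    simp only [List.mem_append, List.mem_singleton, ih]
    constructor
    · rintro (hle | rfl)
      · exact C.le_trans _ _ _ hle (maxpred_le C a h)
      · exact C.le_refl _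
    · intro hle
      by_cases hba : b = a
      · exact Or.inr hba
      · exact Or.inl (maxpred_max C a h hle hba)

lemma nodup_listOf (C : PebbleForestCover V adj k) (a : V) : (listOf C a).Nodup := by
  induction a using listOf_rec C with
  | h1 a h => rw [listOf_neg C a h]; exact List.nodup_singleton a
  | h2 a h ih =>
    rw [listOf_pos C a h]
    rw [List.nodup_append]
    refine ⟨ih, List.nodup_singleton a, ?_⟩
    intro x hx y hy hx'
    rw [List.mem_singleton] at hy
    rw [mem_listOf, hx', hy] at hx
    exact maxpred_ne C a h (C.le_antisymm _ _ (maxpred_le C a h) hx)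

lemma prefix_listOf (C : PebbleForestCover V adj k) (a : V) :
    ∀ b, C.le b a → listOf C b <+: listOf C a := by
  induction a using listOf_rec C with
  | h1 a h =>
    intro b hle
    by_cases hba : b = a
    · subst hba; exact List.prefix_refl _
    · exact absurd ⟨b, hle, hba⟩ h
  | h2 a h ih =>
    intro b hle
    by_cases hba : b = a
    · subst hba; exact List.prefix_refl _
    · rw [listOf_pos C a h]
      exact (ih b (maxpred_max C a h hle hba)).trans (List.prefix_append _ _)

lemma listOf_take (C : PebbleForestCover V adj k) (a : V) (i : ℕ)
    (h : i < (listOf C a).length) :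
    listOf C ((listOf C a).get ⟨i, h⟩) = (listOf C a).take (i + 1) := by
  set b := (listOf C a).get ⟨i, h⟩ with hb
  clear_value b
  have hmem : b ∈ listOf C a := hb ▸ List.get_mem _ _
  have hle : C.le b a := (mem_listOf C a b).1 hmem
  have hpre : listOf C b <+: listOf C a := prefix_listOf C a b hle
  have hlen : (listOf C b).length ≤ (listOf C a).length := hpre.length_le
  have hbne := listOf_ne_nil C b
  have hpos : 0 < (listOf C b).length := List.length_pos_iff.mpr hbne
  have hidx : (listOf C b).length - 1 < (listOf C a).length := by omega
  have hget : (listOf C a)[(listOf C b).length - 1]'hidx = b := by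
    rw [← hpre.getElem (by omega), ← List.getLast_eq_getElem]
    exact getLast_listOf C b hbne
  have hgeti : (listOf C a)[i]'h = b := hb.symm
  have hii : i = (listOf C b).length - 1 :=
    (nodup_listOf C a).getElem_inj_iff.mp (hgeti.trans hget.symm)
  have hlenb : (listOf C b).length = i + 1 := by omega
  have hpre2 : listOf C b <+: listOf C a := prefix_listOf C a b hle
  rw [List.prefix_iff_eq_take] at hpre2
  rw [hpre2, hlenb]

lemma pebCond_self {X : Type} {k : ℕ} (s : List (Fin k × X)) : pebCond s s :=
  Or.inl ⟨List.prefix_refl s, by simp⟩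

lemma pebCond_symm {X : Type} {k : ℕ} {s t : List (Fin k × X)} (h : pebCond s t) :
    pebCond t s := h.elim Or.inr Or.inl

lemma gaifman_symm {σ : Signature} {A : Struct σ} {v v' : A.carrier}
    (h : gaifman A v v') : gaifman A v' v := by
  obtain ⟨hne, r, x, i, j, hrel, hxi, hxj, hij⟩ := h
  exact ⟨Ne.symm hne, r, x, j, i, hrel, hxj, hxi, Ne.symm hij⟩

section Alg

variable {σ : Signature} {k : ℕ} {A : Struct σ}

/-- The coalgebra associated with a pebble forest cover. -/
noncomputable def playAlg (C : PebbleForestCover A.carrier (gaifman A) k) :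
    A.carrier → Peb A.carrier k := fun a =>
  ⟨(listOf C a).map (fun b => (C.p b, b)), by simp [listOf_ne_nil]⟩

lemma playAlg_val (C : PebbleForestCover A.carrier (gaifman A) k) (a : A.carrier) :
    (playAlg C a).1 = (listOf C a).map (fun b => (C.p b, b)) := rfl

lemma getLast?_playAlg (C : PebbleForestCover A.carrier (gaifman A) k) (a : A.carrier) :
    (playAlg C a).1.getLast? = some (C.p a, a) := by
  rw [playAlg_val, List.getLast?_map, getLast?_listOf]
  rfl

lemma lastP_playAlg (C : PebbleForestCover A.carrier (gaifman A) k) (a : A.carrier) :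
    lastP (playAlg C a) = (C.p a, a) := by
  have h := getLast?_playAlg C a
  rw [List.getLast?_eq_getLast_of_ne_nil (playAlg C a).2] at h
  exact Option.some_injective _ h

lemma pebCond_playAlg_of_le (C : PebbleForestCover A.carrier (gaifman A) k)
    {v v' : A.carrier} (hadj : gaifman A v v') (hle : C.le v v') :
    pebCond (playAlg C v).1 (playAlg C v').1 := by
  left
  have hpre : listOf C v <+: listOf C v' := prefix_listOf C v' v hle
  refine ⟨by simpa [playAlg_val] using hpre.map _, ?_⟩
  intro m hm
  rw [playAlg_val, playAlg_val, List.length_map, ← List.map_drop] at hm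
  obtain ⟨w, hw, rfl⟩ := List.mem_map.mp hm
  rw [getLast?_playAlg]
  simp only [Option.map_some, ne_eq, Option.some.injEq]
  -- goal : ¬ C.p v = C.p w
  have hwv' : C.le w v' := (mem_listOf C v' w).1 (List.mem_of_mem_drop hw)
  have hwnotin : w ∉ listOf C v := by
    have htake : listOf C v = (listOf C v').take (listOf C v).length :=
      List.prefix_iff_eq_take.mp hpre
    intro hcontra
    exact List.disjoint_take_drop (nodup_listOf C v') (le_refl _) (htake ▸ hcontra) hw
  have hnotle : ¬ C.le w v := fun hc => hwnotin ((mem_listOf C v w).2 hc)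
  have hvw : C.le v w := by
    rcases C.pred_chain v' v w hle hwv' with h1 | h1
    · exact h1
    · exact absurd h1 hnotle
  have hne : v ≠ w := fun hc => hnotle (hc ▸ C.le_refl v)
  exact C.pebble v v' w hadj hle hvw hne hwv'

lemma isPebCoalg_playAlg (C : PebbleForestCover A.carrier (gaifman A) k) :
    IsPebCoalg k A (playAlg C) := by
  refine ⟨?_, ?_, ?_⟩
  · intro r x hrel
    refine ⟨?_, ?_⟩
    · intro i j
      by_cases hx : x i = x j
      · show pebCond (playAlg C (x i)).1 (playAlg C (x j)).1
        rw [hx]; exact pebCond_self _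
      · have hadj : gaifman A (x i) (x j) :=
          ⟨hx, r, x, i, j, hrel, rfl, rfl, fun hij => hx (congrArg x hij)⟩
        show pebCond (playAlg C (x i)).1 (playAlg C (x j)).1
        rcases C.cover _ _ hadj with hle | hle
        · exact pebCond_playAlg_of_le C hadj hle
        · exact pebCond_symm (pebCond_playAlg_of_le C (gaifman_symm hadj) hle)
    · have hxx : (fun i => (lastP (playAlg C (x i))).2) = x := by
        funext i; rw [lastP_playAlg]
      show A.rel r fun i => (lastP (playAlg C (x i))).2
      rw [hxx]
      exact hrel
  · intro a; rw [lastP_playAlg]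
  · intro a i h
    have h' : i < (listOf C a).length := by simpa [playAlg_val] using h
    have hsnd : ((playAlg C a).1.get ⟨i, h⟩).2 = (listOf C a).get ⟨i, h'⟩ := by
      simp [playAlg_val]
    rw [hsnd, playAlg_val, listOf_take C a i h', playAlg_val, List.map_take]

/-- The pebble forest cover associated with a coalgebra. -/
noncomputable def covOf [Finite A.carrier] (α : A.carrier → Peb A.carrier k)
    (hα : IsPebCoalg k A α) : PebbleForestCover A.carrier (gaifman A) k where
  le a b := (α a).1 <+: (α b).1
  le_refl a := List.prefix_refl _
  le_antisymm a b h1 h2 := by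
    have hv : (α a).1 = (α b).1 := h1.eq_of_length (le_antisymm h1.length_le h2.length_le)
    have hl : lastP (α a) = lastP (α b) := congrArg lastP (Subtype.ext hv)
    rw [← hα.2.1 a, ← hα.2.1 b, hl]
  le_trans a b c h1 h2 := h1.trans h2
  pred_chain a b c h1 h2 := List.prefix_or_prefix_of_prefix h1 h2
  pred_finite a := Set.toFinite _
  cover a b hab := by
    obtain ⟨hne, r, x, i, j, hrel, hxi, hxj, hij⟩ := hab
    have hpc := (hα.1 r x hrel).1 i j
    simp only at hpc
    rw [hxi, hxj] at hpc
    rcases hpc with ⟨h1, _⟩ | ⟨h1, _⟩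
    · exact Or.inl h1
    · exact Or.inr h1
  p a := (lastP (α a)).1
  pebble v v' w hadj hle hvw hne hwv' := by
    obtain ⟨hvv', r, x, i, j, hrel, hxi, hxj, hij⟩ := hadj
    have hpc := (hα.1 r x hrel).1 i j
    simp only at hpc
    rw [hxi, hxj] at hpc
    rcases hpc with ⟨h1, h2⟩ | ⟨h1, _⟩
    swap
    · -- α v' <+: α v together with le v v' forces v = v', contradiction
      have hv : (α v).1 = (α v').1 := hle.eq_of_length (le_antisymm hle.length_le h1.length_le)
      have hl : lastP (α v) = lastP (α v') := congrArg lastP (Subtype.ext hv)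
      exact absurd (by rw [← hα.2.1 v, ← hα.2.1 v', hl]) hvv'
    · -- main case
      have hvwne : (α v).1 ≠ (α w).1 := by
        intro hc
        exact hne (by rw [← hα.2.1 v, ← hα.2.1 w, congrArg lastP (Subtype.ext hc)])
      have hlt : (α v).1.length < (α w).1.length :=
        lt_of_le_of_ne hvw.length_le (fun hc => hvwne (hvw.eq_of_length hc))
      have hlw : (α w).1.length ≤ (α v').1.length := hwv'.length_le
      have hwpos : 0 < (α w).1.length := List.length_pos_iff.mpr (α w).2
      -- lastP (α w) lives in the droped part of (α v').1
      have hidx : (α w).1.length - 1 < (α w).1.length := by omega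
      have hgl : (α v').1[(α w).1.length - 1]'(by omega) = lastP (α w) := by
        rw [← hwv'.getElem hidx, ← List.getLast_eq_getElem]
        rfl
      have hmem : lastP (α w) ∈ (α v').1.drop (α v).1.length := by
        have hidx2 : (α w).1.length - 1 - (α v).1.length <
            ((α v').1.drop (α v).1.length).length := by
          rw [List.length_drop]; omega
        have heq : ((α v').1.drop (α v).1.length)[(α w).1.length - 1
            - (α v).1.length]'hidx2 = lastP (α w) := by
          rw [List.getElem_drop,
            getElem_congr_idx (show (α v).1.length + ((α w).1.length - 1 - (α v).1.length)
              = (α w).1.length - 1 from by omega), hgl]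
        exact heq ▸ List.getElem_mem hidx2
      have hfst := h2 (lastP (α w)) hmem
      rw [List.getLast?_eq_getLast_of_ne_nil (α v).2] at hfst
      intro hc
      apply hfst
      show (some (lastP (α v))).map Prod.fst = _
      rw [Option.map_some]
      exact congrArg some hc

end Alg

section Roundtrip

variable {σ : Signature} {k : ℕ} {A : Struct σ}
variable (α : A.carrier → Peb A.carrier k) (hα : IsPebCoalg k A α)

lemma getLast?_take' {X : Type} (l : List X) (i : ℕ) (h : i < l.length) :
    (l.take (i + 1)).getLast? = some (l[i]'h) := by
  rw [List.getLast?_eq_getElem?]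
  have hlen : (l.take (i + 1)).length = i + 1 := by
    rw [List.length_take]; omega
  rw [hlen]
  simp only [Nat.add_sub_cancel]
  rw [List.getElem?_take_of_lt (by omega), List.getElem?_eq_getElem h]

include hα in
lemma lastP_alpha_get (a : A.carrier) (i : ℕ) (h : i < (α a).1.length) :
    lastP (α ((α a).1.get ⟨i, h⟩).2) = (α a).1.get ⟨i, h⟩ := by
  have hc := hα.2.2 a i h
  have h1 := List.getLast?_eq_getLast_of_ne_nil (α ((α a).1.get ⟨i, h⟩).2).2
  have h2 : (α ((α a).1.get ⟨i, h⟩).2).1.getLast? = some ((α a).1.get ⟨i, h⟩) := by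
    rw [hc, getLast?_take' (α a).1 i h]
    rfl
  rw [h1] at h2
  exact Option.some_injective _ h2

include hα in
lemma alpha_get_eq (a : A.carrier) (i : ℕ) (h : i < (α a).1.length) :
    (α a).1.get ⟨i, h⟩ =
      ((lastP (α ((α a).1.get ⟨i, h⟩).2)).1, ((α a).1.get ⟨i, h⟩).2) := by
  rw [lastP_alpha_get α hα a i h]

include hα in
lemma alpha_eq_map (a : A.carrier) :
    (α a).1 = ((α a).1.map Prod.snd).map (fun b => ((lastP (α b)).1, b)) := by
  rw [List.map_map]
  apply List.ext_get (by simp)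
  intro i h1 h2
  simp only [List.get_eq_getElem, List.getElem_map]
  exact alpha_get_eq α hα a i h1

/-- Abbreviation for the underlying chain of elements of a play. -/
private def Lc (a : A.carrier) : List A.carrier := (α a).1.map Prod.snd

lemma Lc_ne_nil (a : A.carrier) : Lc α a ≠ [] := by
  simp [Lc, (α a).2]

include hα in
lemma Lc_getLast? (a : A.carrier) : (Lc α a).getLast? = some a := by
  rw [Lc, List.getLast?_map, List.getLast?_eq_getLast_of_ne_nil (α a).2,
    Option.map_some]
  exact congrArg some (hα.2.1 a)

include hα in
lemma Lc_coh (a : A.carrier) (i : ℕ) (h' : i < (Lc α a).length) :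
    Lc α ((Lc α a).get ⟨i, h'⟩) = (Lc α a).take (i + 1) := by
  have h : i < (α a).1.length := by simpa [Lc] using h'
  have hget : (Lc α a).get ⟨i, h'⟩ = ((α a).1.get ⟨i, h⟩).2 := by
    simp [Lc]
  rw [hget]
  show ((α ((α a).1.get ⟨i, h⟩).2).1).map Prod.snd = ((α a).1.map Prod.snd).take (i + 1)
  rw [hα.2.2 a i h, List.map_take]

include hα in
lemma covOf_le_iff [Finite A.carrier] (a b : A.carrier) :
    (covOf α hα).le b a ↔ Lc α b <+: Lc α a := by
  constructor
  · intro h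
    exact (h : (α b).1 <+: (α a).1).map Prod.snd
  · intro h
    show (α b).1 <+: (α a).1
    rw [alpha_eq_map α hα a, alpha_eq_map α hα b]
    exact h.map _

include hα in
lemma Lc_strict [Finite A.carrier] (a : A.carrier) (i : ℕ) (h' : i < (Lc α a).length)
    (hi : i < (Lc α a).length - 1) :
    (covOf α hα).le ((Lc α a).get ⟨i, h'⟩) a ∧ (Lc α a).get ⟨i, h'⟩ ≠ a := by
  constructor
  · rw [covOf_le_iff α hα]
    rw [Lc_coh α hα a i h']
    exact List.take_prefix _ _
  · intro hc
    have := Lc_coh α hα a i h'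
    rw [hc] at this
    have hlen := congrArg List.length this
    rw [List.length_take] at hlen
    omega

include hα in
lemma listOf_covOf [Finite A.carrier] (a : A.carrier) :
    listOf (covOf α hα) a = Lc α a := by
  induction a using listOf_rec (covOf α hα) with
  | h1 a h =>
    rw [listOf_neg _ a h]
    have hpos : 0 < (Lc α a).length := List.length_pos_iff.mpr (Lc_ne_nil α a)
    have hlen1 : (Lc α a).length = 1 := by
      by_contra hlen
      have h2 : 2 ≤ (Lc α a).length := by omega
      have := Lc_strict α hα a 0 (by omega) (by omega)
      exact h ⟨_, this.1, this.2⟩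
    obtain ⟨x, hx⟩ := List.length_eq_one_iff.mp hlen1
    have := Lc_getLast? α hα a
    rw [hx] at this ⊢
    simp only [List.getLast?_singleton, Option.some.injEq] at this
    rw [this]
  | h2 a h ih =>
    rw [listOf_pos _ a h, ih]
    set m := maxpred (covOf α hα) a h with hm
    have hma : (covOf α hα).le m a := maxpred_le _ a h
    have hmne : m ≠ a := maxpred_ne _ a h
    have p1 : Lc α m <+: Lc α a := (covOf_le_iff α hα a m).1 hma
    have p2 : Lc α m ≠ Lc α a := by
      intro he
      apply hmne
      have h1 := Lc_getLast? α hα m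
      rw [he, Lc_getLast? α hα a] at h1
      exact (Option.some_injective _ h1).symm
    have hmpos : 0 < (Lc α m).length := List.length_pos_iff.mpr (Lc_ne_nil α m)
    have ln : (Lc α m).length < (Lc α a).length :=
      lt_of_le_of_ne p1.length_le (fun hl => p2 (p1.eq_of_length hl))
    have hn2 : 2 ≤ (Lc α a).length := by omega
    set n := (Lc α a).length with hnn
    have hi : n - 2 < n := by omega
    obtain ⟨hble, hbne⟩ := Lc_strict α hα a (n - 2) hi (by omega)
    set b := (Lc α a).get ⟨n - 2, hi⟩ with hb
    have hbm : (covOf α hα).le b m := maxpred_max _ a h hble hbne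
    have hLb : Lc α b <+: Lc α m := (covOf_le_iff α hα m b).1 hbm
    have hLbl : (Lc α b).length = n - 1 := by
      have := Lc_coh α hα a (n - 2) hi
      rw [← hb] at this
      rw [this, List.length_take]
      omega
    have hml : (Lc α m).length = n - 1 := by
      have := hLb.length_le
      omega
    have hne : Lc α a ≠ [] := Lc_ne_nil α a
    have hfin : (Lc α a).dropLast ++ [(Lc α a).getLast hne] = Lc α a :=
      List.dropLast_append_getLast hne
    have hglast : (Lc α a).getLast hne = a := by
      have h1 := Lc_getLast? α hα a
      rw [List.getLast?_eq_getLast_of_ne_nil hne] at h1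
      exact Option.some_injective _ h1
    have htake : Lc α m = (Lc α a).take (n - 1) := by
      rw [List.prefix_iff_eq_take.mp p1, hml]
    rw [hglast] at hfin
    rw [htake, hnn, ← List.dropLast_eq_take]
    exact hfin

include hα in
lemma playAlg_covOf [Finite A.carrier] (a : A.carrier) :
    (playAlg (covOf α hα) a).1 = (α a).1 := by
  rw [playAlg_val, listOf_covOf α hα a]
  exact (alpha_eq_map α hα a).symm

end Roundtrip

lemma PFC.ext' {V : Type} {adj : V → V → Prop} {k : ℕ}
    {C D : PebbleForestCover V adj k} (hle : C.le = D.le) (hp : C.p = D.p) : C = D := by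
  cases C; cases D
  dsimp at hle hp
  subst hle; subst hp
  rfl

lemma covOf_playAlg {σ : Signature} {k : ℕ} {A : Struct σ} [Finite A.carrier]
    (C : PebbleForestCover A.carrier (gaifman A) k) :
    covOf (playAlg C) (isPebCoalg_playAlg C) = C := by
  apply PFC.ext'
  · funext a b
    apply propext
    show (playAlg C a).1 <+: (playAlg C b).1 ↔ C.le a b
    constructor
    · intro hpre
      have h1 := hpre.map Prod.snd
      have hid : (Prod.snd ∘ fun b : A.carrier => (C.p b, b)) = id := rfl
      simp only [playAlg_val, List.map_map, hid, List.map_id] at h1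
      have hmem : a ∈ listOf C b := by
        apply h1.subset
        have := List.getLast_mem (listOf_ne_nil C a)
        rwa [getLast_listOf C a (listOf_ne_nil C a)] at this
      exact (mem_listOf C b a).1 hmem
    · intro hle
      exact (prefix_listOf C b a hle).map _
  · funext a
    show (lastP (playAlg C a)).1 = C.p a
    rw [lastP_playAlg]

end PebProof

/-- For a finite structure `A` and `k > 0`, there is a bijective
correspondence between `P_k`-coalgebras on `A` and `k`-pebble forest covers of the
Gaifman graph of `A`. -/
theorem pebCoalgebras_equiv_pebbleForestCovers
    (σ : Signature) (k : ℕ) (hk : 0 < k) (A : Struct σ) [Fintype A.carrier] :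
    Nonempty ({α : A.carrier → Peb A.carrier k // IsPebCoalg k A α} ≃
              PebbleForestCover A.carrier (gaifman A) k) := by
  refine ⟨⟨fun s => PebProof.covOf s.1 s.2,
    fun C => ⟨PebProof.playAlg C, PebProof.isPebCoalg_playAlg C⟩, ?_, ?_⟩⟩
  · rintro ⟨α, hα⟩
    apply Subtype.ext
    funext a
    exact Subtype.ext (PebProof.playAlg_covOf α hα a)
  · intro C
    exact PebProof.covOf_playAlg C
end

section
/- For k > 0 and pointed Kripke structures (i.e., pointed σ-structures over a signature with symbols of arity ≤ 2), the k-step unravelling M_k is a comonad on the category of pointed σ-structures: M_k(A, a) has universe consisting of [a] together with all sequences [a_0, α_1, a_1, …, α_j, a_j] with a_0 = a, 1 ≤ j ≤ k, and R^A_{α_i}(a_i, a_{i+1}) for all i < j; distinguished element [a]; and R^{M_k(A,a)}_α(s,t) iff t = s[α, a'] for some a'. The counit sends a sequence to its last element; coextension is defined prefix-wise; these satisfy the comonad laws. -/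
/-- A Kripke structure over a signature with relation symbols of arity at most 2:
binary relations (transitions) indexed by labels in `Λ` and unary relations
(propositions) indexed by `P`. -/
structure Kripke (Λ P : Type) where
  carrier : Type
  trans : Λ → carrier → carrier → Prop
  props : P → carrier → Prop

/-- `s` is a path in `M` starting from `a`: each step `(αᵢ, aᵢ)` of `s` is a
transition `R_{αᵢ}(a_{i-1}, aᵢ)` from the previous element (which is `a` at the
start). -/
def IsPath {Λ P : Type} (M : Kripke Λ P) (a : M.carrier) (s : List (Λ × M.carrier)) : Prop :=
  ∀ (i : ℕ) (h : i < s.length),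
    M.trans (s.get ⟨i, h⟩).1 (((s.take i).getLast?).elim a Prod.snd) (s.get ⟨i, h⟩).2

/-- The universe of the `k`-step unravelling of `(M, a)`: paths from `a` of length
≤ k (the empty path corresponds to `[a]`). -/
def MPath {Λ P : Type} (M : Kripke Λ P) (a : M.carrier) (k : ℕ) : Type :=
  { s : List (Λ × M.carrier) // s.length ≤ k ∧ IsPath M a s }

/-- The distinguished element `[a]` of the unravelling. -/
def nilPath {Λ P : Type} (M : Kripke Λ P) (a : M.carrier) (k : ℕ) : MPath M a k :=
  ⟨[], by simp, fun i h => absurd h (by simp)⟩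

/-- The counit: the last element of a path (which is `a` for the empty path). -/
def lastM {Λ P : Type} {M : Kripke Λ P} {a : M.carrier} {k : ℕ} (s : MPath M a k) :
    M.carrier :=
  (s.1.getLast?).elim a Prod.snd

/-- The `k`-step unravelling `M_k(A, a)` of a pointed Kripke structure: its elements
are paths from `a` of length ≤ k, `R_α(s, t)` holds iff `t = s[α, a']` for some `a'`,
and unary relations are inherited along last elements. -/
def unravel {Λ P : Type} (k : ℕ) (M : Kripke Λ P) (a : M.carrier) : Kripke Λ P where
  carrier := MPath M a k
  trans l s t := ∃ a' : M.carrier, t.1 = s.1 ++ [(l, a')]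
  props p s := M.props p (lastM s)

/-- Homomorphisms of Kripke structures. -/
def IsKHom {Λ P : Type} (M N : Kripke Λ P) (f : M.carrier → N.carrier) : Prop :=
  (∀ l x y, M.trans l x y → N.trans l (f x) (f y)) ∧
  (∀ p x, M.props p x → N.props p (f x))

/-- Paths are closed under prefixes. -/
theorem IsPath.take {Λ P : Type} {M : Kripke Λ P} {a : M.carrier}
    {s : List (Λ × M.carrier)} (hs : IsPath M a s) (n : ℕ) : IsPath M a (s.take n) := by
  intro i h
  have hn : i < n := by simpa using lt_of_lt_of_le h (by simp [List.length_take])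
  have hlen : i < s.length := lt_of_lt_of_le h (by
    simpa using List.length_take_le n s)
  have key := hs i hlen
  have e1 : (s.take n).get ⟨i, h⟩ = s.get ⟨i, hlen⟩ := by
    simp [List.get_eq_getElem, List.getElem_take]
  have e2 : (s.take n).take i = s.take i := by
    rw [List.take_take, Nat.min_eq_left (le_of_lt hn)]
  rw [e1, e2]
  exact key

/-- The raw coextension of `f` along the unravelling comonad: the `i`-th entry of
`f* s` is `(αᵢ, f(prefix of s of length i))`. -/
def coextRaw {Λ P : Type} {M : Kripke Λ P} {a : M.carrier} {k : ℕ} {β : Type}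
    (f : MPath M a k → β) (s : MPath M a k) : List (Λ × β) :=
  (List.finRange s.1.length).map fun i =>
    ((s.1.get i).1,
      f ⟨s.1.take (i.1 + 1),
        ⟨le_trans (by simpa using List.length_take_le (i.1 + 1) s.1) s.2.1,
         s.2.2.take (i.1 + 1)⟩⟩)


section UnravelAux

variable {Λ P : Type} {M : Kripke Λ P} {a : M.carrier} {k : ℕ}

/-- The length-`n` prefix of a path. -/
def pref (s : MPath M a k) (n : ℕ) : MPath M a k :=
  ⟨s.1.take n,
    ⟨le_trans (by simpa using List.length_take_le n s.1) s.2.1, s.2.2.take n⟩⟩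

theorem pref_full (s : MPath M a k) : pref s s.1.length = s :=
  Subtype.ext (by simp [pref])

theorem pref_zero (s : MPath M a k) : pref s 0 = nilPath M a k :=
  Subtype.ext (by simp [pref, nilPath])

theorem coextRaw_length {β : Type} (f : MPath M a k → β) (s : MPath M a k) :
    (coextRaw f s).length = s.1.length := by
  simp [coextRaw]

theorem coextRaw_getElem {β : Type} (f : MPath M a k → β) (s : MPath M a k)
    (i : ℕ) (h : i < (coextRaw f s).length) (h' : i < s.1.length) :
    (coextRaw f s)[i] = ((s.1[i]).1, f (pref s (i + 1))) := by
  simp [coextRaw, pref, List.get_eq_getElem]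

theorem getLast?_take_succ {β : Type} (l : List β) (i : ℕ) (h : i < l.length) :
    (l.take (i + 1)).getLast? = some l[i] := by
  rw [List.getLast?_eq_getElem?]
  have hl : (l.take (i + 1)).length = i + 1 := by rw [List.length_take]; omega
  rw [hl]
  simp [List.getElem?_take, h, List.getElem?_eq_getElem]

theorem elim_getLast_pref {β : Type} (b : β) (f : MPath M a k → β)
    (hf0 : f (nilPath M a k) = b) (s : MPath M a k) (n : ℕ) (hn : n ≤ s.1.length) :
    (((coextRaw f s).take n).getLast?).elim b Prod.snd = f (pref s n) := by
  cases n with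
  | zero => simp [pref_zero, hf0]
  | succ j =>
    have hj : j < (coextRaw f s).length := by rw [coextRaw_length]; omega
    rw [getLast?_take_succ _ j hj, coextRaw_getElem f s j hj (by omega)]
    rfl

theorem coextRaw_pref {β : Type} (f : MPath M a k → β) (s : MPath M a k) (n : ℕ) :
    coextRaw f (pref s n) = (coextRaw f s).take n := by
  apply List.ext_getElem
  · rw [coextRaw_length, List.length_take, coextRaw_length]; simp [pref]
  · intro i h1 h2
    have hin : i < n := by
      have := h1; rw [coextRaw_length] at this; simp [pref, List.length_take] at this; omega
    have hi : i < s.1.length := by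
      have := h2; rw [List.length_take] at this; rw [coextRaw_length] at this; omega
    have hip : i < (pref s n).1.length := by
      have := h1; rwa [coextRaw_length] at this
    have hi' : i < (coextRaw f s).length := by rw [coextRaw_length]; exact hi
    rw [List.getElem_take, coextRaw_getElem f (pref s n) i h1 hip,
      coextRaw_getElem f s i hi' hi]
    have e1 : (pref s n).1[i] = s.1[i] := by simp [pref, List.getElem_take]
    have e2 : pref (pref s n) (i + 1) = pref s (i + 1) := by
      apply Subtype.ext
      simp [pref, List.take_take]
      omega
    rw [e1, e2]

end UnravelAux

/-- for `k > 0`, the `k`-step unravelling `M_k` is a comonad on pointed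
Kripke structures: the counit (taking last elements) is a pointed homomorphism
`M_k(M,a) → (M,a)`; for every pointed homomorphism `f : M_k(M,a) → (N,b)` the
coextension `f*` is a pointed homomorphism `M_k(M,a) → M_k(N,b)` (in particular
`f* s` is a path from `b` in `N` of length ≤ k); and the co-Kleisli comonad laws
`ε* = id`, `ε ∘ f* = f` and `(g ∘ f*)* = g* ∘ f*` hold. -/
theorem unravel_is_comonad {Λ P : Type} (k : ℕ) (hk : 0 < k)
    (M : Kripke Λ P) (a : M.carrier) :
    -- the counit is a pointed homomorphism
    (IsKHom (unravel k M a) M lastM ∧ lastM (nilPath M a k) = a) ∧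
    -- coextension of a pointed homomorphism is a pointed homomorphism into the
    -- unravelling of the codomain, and the right counit law `ε ∘ f* = f` holds
    (∀ (N : Kripke Λ P) (b : N.carrier) (f : MPath M a k → N.carrier),
      IsKHom (unravel k M a) N f → f (nilPath M a k) = b →
      ∃ star : MPath M a k → MPath N b k,
        (∀ s, (star s).1 = coextRaw f s) ∧
        IsKHom (unravel k M a) (unravel k N b) star ∧
        star (nilPath M a k) = nilPath N b k ∧
        (∀ s, lastM (star s) = f s)) ∧
    -- the left counit law `ε* = id`
    (∀ s : MPath M a k, coextRaw (lastM : MPath M a k → M.carrier) s = s.1) ∧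
    -- coassociativity `(g ∘ f*)* = g* ∘ f*`
    (∀ (N N' : Kripke Λ P) (b : N.carrier)
        (f : MPath M a k → N.carrier) (g : MPath N b k → N'.carrier),
      IsKHom (unravel k M a) N f → IsKHom (unravel k N b) N' g →
      ∀ star : MPath M a k → MPath N b k, (∀ s, (star s).1 = coextRaw f s) →
      ∀ s : MPath M a k, coextRaw (fun u => g (star u)) s = coextRaw g (star s)) := by
  constructor
  · -- counit is a pointed homomorphism
    refine ⟨⟨?_, fun p s hp => hp⟩, rfl⟩
    rintro l s t ⟨a', ht⟩
    have hlt : s.1.length < t.1.length := by rw [ht]; simp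
    have key := t.2.2 s.1.length hlt
    have h1 : t.1.get ⟨s.1.length, hlt⟩ = (l, a') := by
      simp [List.get_eq_getElem, ht]
    have h2 : t.1.take s.1.length = s.1 := by rw [ht, List.take_left]
    rw [h1, h2] at key
    have h3 : lastM t = a' := by
      show (t.1.getLast?).elim a Prod.snd = a'
      rw [ht, List.getLast?_concat]
      rfl
    rw [h3]
    exact key
  refine ⟨?_, ?_, ?_⟩
  · -- coextension
    intro N b f hf hf0
    have hlen : ∀ s : MPath M a k, (coextRaw f s).length ≤ k := by
      intro s; rw [coextRaw_length]; exact s.2.1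
    have hpath : ∀ s : MPath M a k, IsPath N b (coextRaw f s) := by
      intro s i h
      have hi : i < s.1.length := by rwa [coextRaw_length] at h
      have hstep : (unravel k M a).trans (s.1[i].1) (pref s i) (pref s (i + 1)) := by
        refine ⟨s.1[i].2, ?_⟩
        show s.1.take (i + 1) = s.1.take i ++ [s.1[i]]
        rw [List.take_succ, List.getElem?_eq_getElem hi]
        rfl
      have := hf.1 _ _ _ hstep
      rw [List.get_eq_getElem, coextRaw_getElem f s i h hi,
        elim_getLast_pref b f hf0 s i (le_of_lt hi)]
      exact this
    refine ⟨fun s => ⟨coextRaw f s, hlen s, hpath s⟩, fun s => rfl, ?_, ?_, ?_⟩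
    · constructor
      · rintro l s t ⟨a', ht⟩
        refine ⟨f t, ?_⟩
        show coextRaw f t = coextRaw f s ++ [(l, f t)]
        have hlenT : t.1.length = s.1.length + 1 := by rw [ht]; simp
        have hsp : pref t s.1.length = s := by
          apply Subtype.ext; show t.1.take s.1.length = s.1
          rw [ht, List.take_left]
        have h1 : coextRaw f s = (coextRaw f t).take s.1.length := by
          have h1' := coextRaw_pref f t s.1.length
          rwa [hsp] at h1'
        have hn : s.1.length < (coextRaw f t).length := by
          rw [coextRaw_length f t, hlenT]; omega
        have h2 : (coextRaw f t)[s.1.length] = (l, f t) := by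
          rw [coextRaw_getElem f t s.1.length hn (by omega)]
          have e1 : t.1[s.1.length] = (l, a') := by simp [ht]
          have e2 : pref t (s.1.length + 1) = t := by
            rw [← hlenT]; exact pref_full t
          rw [e1, e2]
        have h3 : s.1.length + 1 = (coextRaw f t).length := by
          rw [coextRaw_length f t, hlenT]
        calc coextRaw f t = (coextRaw f t).take (s.1.length + 1) := by
              rw [h3, List.take_length]
          _ = (coextRaw f t).take s.1.length ++ ((coextRaw f t)[s.1.length]?).toList :=
              List.take_succ
          _ = coextRaw f s ++ [(l, f t)] := by
              rw [List.getElem?_eq_getElem hn, h2, ← h1]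
              rfl
      · intro p s hp
        show N.props p (lastM (⟨coextRaw f s, hlen s, hpath s⟩ : MPath N b k))
        have hl : lastM (⟨coextRaw f s, hlen s, hpath s⟩ : MPath N b k) = f s := by
          show ((coextRaw f s).getLast?).elim b Prod.snd = f s
          have := elim_getLast_pref b f hf0 s s.1.length le_rfl
          have hfull : (coextRaw f s).take s.1.length = coextRaw f s := by
            rw [show s.1.length = (coextRaw f s).length from (coextRaw_length f s).symm,
              List.take_length]
          rw [hfull, pref_full s] at this
          exact this
        rw [hl]
        exact hf.2 p s hp
    · apply Subtype.ext
      show coextRaw f (nilPath M a k) = []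
      simp [coextRaw, nilPath]
    · intro s
      show ((coextRaw f s).getLast?).elim b Prod.snd = f s
      have := elim_getLast_pref b f hf0 s s.1.length le_rfl
      have hfull : (coextRaw f s).take s.1.length = coextRaw f s := by
        rw [show s.1.length = (coextRaw f s).length from (coextRaw_length f s).symm,
          List.take_length]
      rw [hfull, pref_full] at this
      exact this
  · -- ε* = id
    intro s
    apply List.ext_getElem
    · simp [coextRaw_length]
    · intro i h1 h2
      rw [coextRaw_getElem lastM s i h1 h2]
      have : lastM (pref s (i + 1)) = (s.1[i]).2 := by
        show ((s.1.take (i + 1)).getLast?).elim a Prod.snd = (s.1[i]).2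
        rw [getLast?_take_succ s.1 i h2]
        rfl
      rw [this]
  · -- coassociativity
    intro N N' b f g hf hg star hstar s
    apply List.ext_getElem
    · rw [coextRaw_length, coextRaw_length, hstar, coextRaw_length]
    · intro i h1 h2
      have hi : i < s.1.length := by rwa [coextRaw_length] at h1
      have hi' : i < (star s).1.length := by rw [hstar, coextRaw_length]; exact hi
      have hic : i < (coextRaw f s).length := by rw [coextRaw_length]; exact hi
      rw [coextRaw_getElem _ s i h1 hi, coextRaw_getElem g (star s) i h2 hi']
      have e1 : ((star s).1[i]).1 = (s.1[i]).1 := by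
        have : (star s).1[i] = (coextRaw f s)[i] := by
          congr 1; exact hstar s
        rw [this, coextRaw_getElem f s i hic hi]
      have e2 : star (pref s (i + 1)) = pref (star s) (i + 1) := by
        apply Subtype.ext
        show (star (pref s (i + 1))).1 = (star s).1.take (i + 1)
        rw [hstar, hstar, coextRaw_pref]
      rw [e1, e2]
end
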